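/- arXiv:1605.00415 — 5 statements merged into one kernel-verified Lean document; each statement's English description precedes it below -/
import Mathlib

section
/- A non-negative integer-valued random variable Z has the Poisson distribution with parameter λ > 0 if and only if E[λ·g(Z+1) − Z·g(Z)] = 0 for all bounded functions g : ℕ → ℝ. -/
open MeasureTheory

private lemma integral_comp_nat {Ω : Type*} [MeasurableSpace Ω] (μ : Measure Ω)
    (Z : Ω → ℕ) (hZmeas : Measurable Z) (f : ℕ → ℝ)
    (hf : Integrable (fun ω => f (Z ω)) μ) :
    ∫ ω, f (Z ω) ∂μ = ∑' n, (μ {ω | Z ω = n}).toReal * f n := by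
  have hfi : Integrable f (μ.map Z) := by
    rw [integrable_map_measure (by apply Measurable.aestronglyMeasurable; exact measurable_from_nat)
      hZmeas.aemeasurable]
    exact hf
  rw [← integral_map hZmeas.aemeasurable hfi.aestronglyMeasurable, integral_countable' hfi]
  congr 1
  ext n
  rw [measureReal_def, Measure.map_apply hZmeas (measurableSet_singleton n)]
  rw [smul_eq_mul]
  rfl

/-- A non-negative integer-valued random variable `Z` has the Poisson distribution with
parameter `l > 0` if and only if `E[l·g(Z+1) − Z·g(Z)] = 0` for all bounded `g : ℕ → ℝ`. -/
theorem poisson_characterization {Ω : Type*} [MeasurableSpace Ω]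
    (μ : Measure Ω) [IsProbabilityMeasure μ]
    (Z : Ω → ℕ) (hZmeas : Measurable Z)
    (hZint : Integrable (fun ω => (Z ω : ℝ)) μ)
    (l : ℝ) (hl : 0 < l) :
    (∀ k : ℕ, (μ {ω | Z ω = k}).toReal = l ^ k * Real.exp (-l) / (Nat.factorial k)) ↔
      (∀ g : ℕ → ℝ, (∃ C : ℝ, ∀ n : ℕ, |g n| ≤ C) →
        ∫ ω, (l * g (Z ω + 1) - (Z ω : ℝ) * g (Z ω)) ∂μ = 0) := by
  set p : ℕ → ℝ := fun n => (μ {ω | Z ω = n}).toReal with hp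
  have hpnn : ∀ n, 0 ≤ p n := fun n => ENNReal.toReal_nonneg
  have hpeq : ∀ n, p n = (μ {ω | Z ω = n}).toReal := fun n => by rw [hp]
  constructor
  · -- forward direction
    intro hP g ⟨C, hC⟩
    have hC0 : 0 ≤ C := le_trans (abs_nonneg _) (hC 0)
    -- integrability
    have hm1 : Measurable fun ω => g (Z ω + 1) :=
      (measurable_from_nat (f := g)).comp (hZmeas.add measurable_const)
    have hm2 : Measurable fun ω => (Z ω : ℝ) * g (Z ω) :=
      (measurable_from_nat (f := fun n => (n : ℝ) * g n)).comp hZmeas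
    have hg1 : Integrable (fun ω => g (Z ω + 1)) μ := by
      refine Integrable.mono' (integrable_const C) hm1.aestronglyMeasurable ?_
      filter_upwards with ω
      simpa using hC (Z ω + 1)
    have hg2 : Integrable (fun ω => (Z ω : ℝ) * g (Z ω)) μ := by
      refine Integrable.mono' (hZint.const_mul C) hm2.aestronglyMeasurable ?_
      filter_upwards with ω
      rw [norm_mul, Real.norm_natCast, Real.norm_eq_abs]
      rw [mul_comm]
      exact mul_le_mul (hC (Z ω)) le_rfl (Nat.cast_nonneg _) hC0
    rw [integral_sub (hg1.const_mul l) hg2, integral_const_mul]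
    rw [integral_comp_nat μ Z hZmeas (fun n => g (n + 1)) hg1,
      integral_comp_nat μ Z hZmeas (fun n => (n : ℝ) * g n) hg2]
    -- summability
    have hpsum : Summable p := by
      have : Summable (fun n : ℕ => Real.exp (-l) * (l ^ n / n.factorial)) :=
        (Real.summable_pow_div_factorial l).mul_left _
      refine this.congr fun n => ?_
      rw [hpeq n, hP n]; ring
    set a : ℕ → ℝ := fun n => p n * g (n + 1) with ha_def
    have ha : Summable a := by
      refine Summable.of_norm_bounded (hpsum.mul_right C) fun n => ?_
      rw [norm_mul, Real.norm_eq_abs, Real.norm_eq_abs, abs_of_nonneg (hpnn n)]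
      exact mul_le_mul le_rfl (hC (n + 1)) (abs_nonneg _) (hpnn n)
    have hrec : ∀ n : ℕ, p (n + 1) * ((n : ℝ) + 1) = l * p n := by
      intro n
      rw [hpeq, hpeq, hP, hP, Nat.factorial_succ]
      have h1 : (n.factorial : ℝ) ≠ 0 := Nat.cast_ne_zero.mpr n.factorial_ne_zero
      have h2 : ((n : ℝ) + 1) ≠ 0 := by positivity
      push_cast
      field_simp
      ring
    have hbsucc : (fun n => p (n + 1) * (((n : ℕ) + 1 : ℝ) * g (n + 1))) = fun n => l * a n := by
      funext n
      rw [ha_def]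
      push_cast
      linear_combination g (n + 1) * hrec n
    have key : ∑' n, p n * ((n : ℝ) * g n) = l * ∑' n, a n := by
      have hb : Summable (fun n => p n * ((n : ℝ) * g n)) := by
        rw [← summable_nat_add_iff 1]
        refine (ha.mul_left l).congr fun n => ?_
        have h2 := congrFun hbsucc n
        push_cast at h2 ⊢
        linarith [h2]
      rw [hb.tsum_eq_zero_add]
      simp only [Nat.cast_zero, zero_mul, mul_zero, zero_add, Nat.cast_add, Nat.cast_one]
      rw [← tsum_mul_left]
      exact tsum_congr fun n => congrFun hbsucc n
    rw [key]
    ring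
  · -- backward direction
    intro h k
    have hrec : ∀ n : ℕ, l * p n = p (n + 1) * ((n : ℝ) + 1) := by
      intro n
      set g : ℕ → ℝ := fun m => if m = n + 1 then 1 else 0 with hg
      have hbnd : ∃ C : ℝ, ∀ m : ℕ, |g m| ≤ C := by
        refine ⟨1, fun m => ?_⟩
        rw [hg]; dsimp only; split <;> simp
      have hint := h g hbnd
      set f : ℕ → ℝ := fun m => l * g (m + 1) - (m : ℝ) * g m with hf
      have hfm : Measurable fun ω => f (Z ω) := (measurable_from_nat (f := f)).comp hZmeas
      have hfval : ∀ m, f m = if m = n then l else if m = n + 1 then -((n : ℝ) + 1) else 0 := by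
        intro m
        rw [hf, hg]
        dsimp only
        by_cases h1 : m = n
        · subst h1; rw [if_pos rfl, if_pos rfl, if_neg (by omega)]; ring
        · rw [if_neg (by omega : ¬ m + 1 = n + 1), if_neg h1]
          by_cases h2 : m = n + 1
          · subst h2; rw [if_pos rfl, if_pos rfl]; push_cast; ring
          · rw [if_neg h2, if_neg h2]; ring
      have hn0 : (0 : ℝ) ≤ (n : ℝ) + 1 := by positivity
      have hfb : ∀ m, ‖f m‖ ≤ l + ((n : ℝ) + 1) := by
        intro m
        rw [hfval m]
        split_ifs
        · rw [Real.norm_eq_abs, abs_of_nonneg hl.le]; linarith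
        · rw [Real.norm_eq_abs, abs_neg, abs_of_nonneg hn0]; linarith
        · simp; positivity
      have hfi : Integrable (fun ω => f (Z ω)) μ := by
        refine Integrable.mono' (integrable_const (l + ((n : ℝ) + 1))) hfm.aestronglyMeasurable ?_
        filter_upwards with ω using hfb (Z ω)
      have heq : ∫ ω, f (Z ω) ∂μ = ∑' m, p m * f m := integral_comp_nat μ Z hZmeas f hfi
      rw [hf] at heq
      dsimp only at heq
      rw [hint] at heq
      have hsupp : ∀ m ∉ ({n, n + 1} : Finset ℕ), p m * f m = 0 := by
        intro m hm
        simp only [Finset.mem_insert, Finset.mem_singleton, not_or] at hm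
        rw [hfval m, if_neg hm.1, if_neg hm.2, mul_zero]
      have htsum : ∑' m, p m * f m = ∑ m ∈ ({n, n + 1} : Finset ℕ), p m * f m :=
        tsum_eq_sum hsupp
      rw [htsum, Finset.sum_insert (by simp), Finset.sum_singleton, hfval n, hfval (n + 1),
        if_pos rfl, if_neg (by omega : ¬ n + 1 = n), if_pos rfl] at heq
      linear_combination -heq
    have hform : ∀ n : ℕ, p n = p 0 * l ^ n / n.factorial := by
      intro n
      induction n with
      | zero => simp
      | succ n ih =>
        have h1 : ((n : ℝ) + 1) ≠ 0 := by positivity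
        have h2 : (n.factorial : ℝ) ≠ 0 := Nat.cast_ne_zero.mpr n.factorial_ne_zero
        have := hrec n
        rw [ih] at this
        rw [Nat.factorial_succ]
        push_cast
        field_simp at this ⊢
        linear_combination -this
    have hsum1 : ∑' n, p n = 1 := by
      have hdisj : Pairwise (Function.onFun Disjoint fun n => {ω | Z ω = n}) := by
        intro i j hij
        refine Set.disjoint_left.mpr fun ω hi hj => hij ?_
        rw [Set.mem_setOf_eq] at hi hj
        rw [← hi, ← hj]
      have hmeas : ∀ n : ℕ, MeasurableSet {ω | Z ω = n} := fun n =>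
        hZmeas (measurableSet_singleton n)
      have hUnion : (⋃ n, {ω | Z ω = n}) = Set.univ := by
        ext ω; simp only [Set.mem_iUnion, Set.mem_setOf_eq, Set.mem_univ, iff_true]
        exact ⟨Z ω, rfl⟩
      have := measure_iUnion (μ := μ) hdisj hmeas
      rw [hUnion, measure_univ] at this
      have htr := congrArg ENNReal.toReal this.symm
      rw [ENNReal.tsum_toReal_eq (fun n => measure_ne_top μ _)] at htr
      simpa using htr
    have hexp : Real.exp l = ∑' n : ℕ, l ^ n / n.factorial := by
      rw [Real.exp_eq_exp_ℝ, NormedSpace.exp_eq_tsum_div]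
    have hp0 : p 0 * Real.exp l = 1 := by
      rw [hexp, ← tsum_mul_left, ← hsum1]
      congr 1
      funext n
      rw [hform n]
      ring
    have hp0' : p 0 = Real.exp (-l) := by
      rw [Real.exp_neg]
      field_simp at hp0 ⊢
      linarith [hp0]
    have hk := hform k
    rw [hp0'] at hk
    rw [show (μ {ω | Z ω = k}).toReal = p k from rfl, hk]
    ring
end

section
/- If Z is Poisson distributed with parameter λ > 0 and g(k) := E[λ·g(k+1) − k·g(k)] satisfies the Chen-Stein equation for an indicator test function, then the bounded solution g_h of the Chen-Stein equation satisfies ‖Δg_h‖_∞ ≤ (1 − e^{−λ})/λ ≤ min{1, 1/λ}, where Δg_h(k) = g_h(k+1) − g_h(k). -/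
open Finset

noncomputable def csW (l : ℝ) (j : ℕ) : ℝ := l ^ j * Real.exp (-l) / (Nat.factorial j)

noncomputable def csE (l : ℝ) (k : ℕ) : ℝ := ∑ m ∈ Finset.range (k+1), l ^ m / (Nat.factorial m)

noncomputable def csPhi (l : ℝ) (k : ℕ) : ℝ :=
  ∑' i : ℕ, l ^ i * ((Nat.factorial k : ℝ) / (Nat.factorial (k + 1 + i)))

noncomputable def csPsi (l : ℝ) (k : ℕ) : ℝ :=
  ∑ i ∈ Finset.range (k + 1), ((Nat.factorial k : ℝ) / (Nat.factorial (k - i))) * (1 / l) ^ (i + 1)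

noncomputable def csG (l : ℝ) (j : ℕ) : ℕ → ℝ
  | 0 => 0
  | (k + 1) => csW l j * (if j ≤ k then csPhi l k else -csPsi l k)

lemma exp_tsum' (x : ℝ) : Real.exp x = ∑' n : ℕ, x ^ n / n.factorial := by
  rw [Real.exp_eq_exp_ℝ, NormedSpace.exp_eq_tsum_div]

section ChenSteinAux

variable {l : ℝ}

lemma csW_nonneg (hl : 0 < l) (j : ℕ) : 0 ≤ csW l j := by
  unfold csW; positivity

lemma summable_csW (hl : 0 < l) : Summable (csW l) := by
  have h : csW l = fun j => Real.exp (-l) * (l ^ j / j.factorial) := by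
    funext j; unfold csW; ring
  rw [h]
  exact (Real.summable_pow_div_factorial l).mul_left _

lemma tsum_csW (hl : 0 < l) : ∑' j, csW l j = 1 := by
  have h : csW l = fun j => Real.exp (-l) * (l ^ j / j.factorial) := by
    funext j; unfold csW; ring
  rw [h, tsum_mul_left, ← exp_tsum', ← Real.exp_add]
  simp

lemma sum_csW (hl : 0 < l) (k : ℕ) :
    ∑ j ∈ Finset.range (k+1), csW l j = Real.exp (-l) * csE l k := by
  unfold csW csE
  rw [Finset.mul_sum]
  apply Finset.sum_congr rfl
  intro j _; ring

lemma fact_ineq (k i : ℕ) : k.factorial * (i+1).factorial ≤ (k+1+i).factorial := by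
  have h : k.factorial * (i+1).factorial ∣ (k + (i+1)).factorial :=
    Nat.factorial_mul_factorial_dvd_factorial_add k (i+1)
  have h2 : k + (i+1) = k + 1 + i := by omega
  rw [h2] at h
  exact Nat.le_of_dvd (Nat.factorial_pos _) h

lemma summable_phi_terms (hl : 0 < l) (k : ℕ) :
    Summable (fun i : ℕ => l ^ i * ((Nat.factorial k : ℝ) / (Nat.factorial (k + 1 + i)))) := by
  apply Summable.of_nonneg_of_le (fun i => by positivity)
    (fun i => ?_) (Real.summable_pow_div_factorial l)
  have h1 : (Nat.factorial k : ℝ) / (Nat.factorial (k + 1 + i)) ≤ 1 / (Nat.factorial i) := by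
    rw [div_le_div_iff₀ (by positivity) (by positivity)]
    have h2 : (i:ℕ).factorial ≤ (i+1).factorial := Nat.factorial_le (by omega)
    calc (Nat.factorial k : ℝ) * (Nat.factorial i)
        ≤ (Nat.factorial k : ℝ) * (Nat.factorial (i+1)) := by
          exact_mod_cast Nat.mul_le_mul_left _ h2
      _ ≤ (Nat.factorial (k+1+i) : ℝ) * 1 := by
          rw [mul_one]; exact_mod_cast fact_ineq k i
      _ = 1 * (Nat.factorial (k+1+i) : ℝ) := by ring
  calc l ^ i * ((Nat.factorial k : ℝ) / (Nat.factorial (k + 1 + i)))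
      ≤ l ^ i * (1 / (Nat.factorial i)) := by
        apply mul_le_mul_of_nonneg_left h1 (by positivity)
    _ = l ^ i / (Nat.factorial i) := by ring

lemma phi_nonneg (hl : 0 < l) (k : ℕ) : 0 ≤ csPhi l k :=
  tsum_nonneg (fun i => by positivity)

lemma phi_anti (hl : 0 < l) (k : ℕ) : csPhi l (k+1) ≤ csPhi l k := by
  apply Summable.tsum_le_tsum _ (summable_phi_terms hl (k+1)) (summable_phi_terms hl k)
  intro i
  apply mul_le_mul_of_nonneg_left _ (by positivity)
  rw [div_le_div_iff₀ (by positivity) (by positivity)]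
  have key : (k+1).factorial * (k+1+i).factorial ≤ k.factorial * (k+1+1+i).factorial := by
    rw [Nat.factorial_succ k]
    have h3 : k+1+1+i = (k+1+i)+1 := by omega
    rw [h3, Nat.factorial_succ (k+1+i)]
    calc (k+1) * k.factorial * (k+1+i).factorial
        = k.factorial * ((k+1) * (k+1+i).factorial) := by ring
      _ ≤ k.factorial * ((k+1+i+1) * (k+1+i).factorial) :=
          Nat.mul_le_mul_left _ (Nat.mul_le_mul_right _ (by omega))
  exact_mod_cast key

lemma psi_nonneg (hl : 0 < l) (k : ℕ) : 0 ≤ csPsi l k :=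
  Finset.sum_nonneg (fun i _ => by positivity)

lemma psi_mono (hl : 0 < l) (k : ℕ) : csPsi l k ≤ csPsi l (k+1) := by
  unfold csPsi
  calc ∑ i ∈ Finset.range (k+1), ((Nat.factorial k : ℝ) / (Nat.factorial (k - i))) * (1/l)^(i+1)
      ≤ ∑ i ∈ Finset.range (k+1), ((Nat.factorial (k+1) : ℝ) / (Nat.factorial (k+1 - i))) * (1/l)^(i+1) := by
        apply Finset.sum_le_sum
        intro i hi
        rw [Finset.mem_range] at hi
        apply mul_le_mul_of_nonneg_right _ (by positivity)
        rw [div_le_div_iff₀ (by positivity) (by positivity)]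
        have hik : i ≤ k := by omega
        have key : k.factorial * (k+1-i).factorial ≤ (k+1).factorial * (k-i).factorial := by
          have h1 : k+1-i = (k-i)+1 := by omega
          rw [h1, Nat.factorial_succ (k-i), Nat.factorial_succ k]
          calc k.factorial * ((k-i+1) * (k-i).factorial)
              = (k-i+1) * (k.factorial * (k-i).factorial) := by ring
            _ ≤ (k+1) * (k.factorial * (k-i).factorial) :=
                Nat.mul_le_mul_right _ (by omega)
            _ = (k+1) * k.factorial * (k-i).factorial := by ring
        exact_mod_cast key
    _ ≤ ∑ i ∈ Finset.range (k+2), ((Nat.factorial (k+1) : ℝ) / (Nat.factorial (k+1 - i))) * (1/l)^(i+1) := by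
        apply Finset.sum_le_sum_of_subset_of_nonneg
        · exact Finset.range_subset_range.mpr (by omega)
        · intro i _ _; positivity

lemma psi_eq (hl : 0 < l) (k : ℕ) :
    csPsi l k = ((Nat.factorial k : ℝ) / l ^ (k+1)) * csE l k := by
  unfold csPsi csE
  rw [Finset.mul_sum]
  rw [← Finset.sum_range_reflect
    (fun m => ((Nat.factorial k : ℝ) / l ^ (k+1)) * (l ^ m / (Nat.factorial m))) (k+1)]
  apply Finset.sum_congr rfl
  intro i hi
  rw [Finset.mem_range] at hi
  have h1 : k + 1 - 1 - i = k - i := by omega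
  rw [h1]
  have hpow : l ^ (k+1) = l ^ (k-i) * l ^ (i+1) := by
    rw [← pow_add]; congr 1; omega
  have hl0 : l ≠ 0 := hl.ne'
  simp only [one_div, inv_pow]
  field_simp
  rw [hpow]; ring

lemma exp_split (hl : 0 < l) (k : ℕ) :
    Real.exp l = csE l k + ∑' i : ℕ, l ^ (k+1+i) / (Nat.factorial (k+1+i)) := by
  have hs : Summable (fun n : ℕ => l ^ n / (n.factorial : ℝ)) := Real.summable_pow_div_factorial l
  have h2 := Summable.sum_add_tsum_nat_add (f := fun n : ℕ => l ^ n / (n.factorial : ℝ)) (k+1) hs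
  rw [exp_tsum', ← h2]
  unfold csE
  congr 1
  apply tsum_congr
  intro i
  have h3 : k+1+i = i+(k+1) := by omega
  rw [h3]

lemma phi_eq (hl : 0 < l) (k : ℕ) :
    csPhi l k = ((Nat.factorial k : ℝ) / l ^ (k+1)) * ∑' i : ℕ, l ^ (k+1+i) / (Nat.factorial (k+1+i)) := by
  unfold csPhi
  rw [← tsum_mul_left]
  apply tsum_congr
  intro i
  have hlne : l ^ (k+1) ≠ 0 := by positivity
  have hfne : ((k+1+i).factorial : ℝ) ≠ 0 := by positivity
  field_simp
  rw [show k+1+i = (k+1)+i by ring, pow_add]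
  ring

lemma phi_add_psi (hl : 0 < l) (k : ℕ) :
    csPhi l k + csPsi l k = ((Nat.factorial k : ℝ) / l ^ (k+1)) * Real.exp l := by
  rw [phi_eq hl k, psi_eq hl k, exp_split hl k]
  ring

lemma summable_u (hl : 0 < l) : Summable (fun n : ℕ => l ^ n / ((n+1).factorial : ℝ)) := by
  apply Summable.of_nonneg_of_le (fun n => by positivity) (fun n => ?_)
    (Real.summable_pow_div_factorial l)
  apply div_le_div_of_nonneg_left (by positivity) (by positivity)
  exact_mod_cast Nat.factorial_le (by omega)

lemma tsum_u (hl : 0 < l) :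
    ∑' n : ℕ, l ^ n / ((n+1).factorial : ℝ) = (Real.exp l - 1) / l := by
  have hs : Summable (fun n : ℕ => l ^ n / (n.factorial : ℝ)) := Real.summable_pow_div_factorial l
  have h2 := Summable.sum_add_tsum_nat_add (f := fun n : ℕ => l ^ n / (n.factorial : ℝ)) 1 hs
  rw [eq_div_iff (ne_of_gt hl)]
  have h3 : (∑' n : ℕ, l ^ n / ((n+1).factorial : ℝ)) * l
      = ∑' n : ℕ, l ^ (n+1) / ((n+1).factorial : ℝ) := by
    rw [← tsum_mul_right]
    apply tsum_congr; intro n; rw [pow_succ]; ring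
  simp only [Finset.range_one, Finset.sum_singleton, pow_zero, Nat.factorial_zero,
    Nat.cast_one] at h2
  rw [h3, eq_sub_iff_add_eq, exp_tsum']
  rw [← h2]
  norm_num [add_comm]

lemma cs_formula (hl : 0 < l) (g : ℕ → ℝ) (f : ℕ → ℝ)
    (hCS : ∀ k : ℕ, f k = l * g (k + 1) - (k : ℝ) * g k) :
    ∀ k : ℕ, g (k+1) * l ^ (k+1)
      = (Nat.factorial k : ℝ) * ∑ m ∈ Finset.range (k+1), l ^ m / (Nat.factorial m) * f m := by
  intro k
  induction k with
  | zero =>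
    have h := hCS 0
    simp only [Nat.cast_zero, zero_mul, sub_zero] at h
    simp only [pow_one, Nat.factorial_zero, Nat.cast_one, one_mul, Finset.range_one,
      Finset.sum_singleton, pow_zero, zero_add] at *
    rw [h]; ring
  | succ k ih =>
    have h := hCS (k+1)
    have hg : l * g (k+2) = f (k+1) + ((k:ℝ)+1) * g (k+1) := by
      push_cast at h; linarith
    have step : g (k+2) * l ^ (k+2) = (l * g (k+2)) * l ^ (k+1) := by
      rw [pow_succ]; ring
    rw [step, hg, Finset.sum_range_succ, mul_add, add_mul]
    have hfact : ((k+1).factorial : ℝ) = ((k:ℝ)+1) * (k.factorial : ℝ) := by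
      rw [Nat.factorial_succ]; push_cast; ring
    have hfne : ((k+1).factorial : ℝ) ≠ 0 := by positivity
    have h1 : ((k:ℝ)+1) * g (k+1) * l ^ (k+1)
        = ((k+1).factorial : ℝ) * ∑ m ∈ Finset.range (k+1), l ^ m / (Nat.factorial m) * f m := by
      rw [hfact, mul_assoc, ih]; ring
    have h2 : ((k+1).factorial : ℝ) * (l ^ (k+1) / ((k+1).factorial : ℝ) * f (k+1))
        = f (k+1) * l ^ (k+1) := by
      field_simp
    push_cast
    push_cast at h1 h2
    linarith [h1, h2]

end ChenSteinAux

section ChenSteinMain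

variable {l : ℝ}

lemma csG_succ (j k : ℕ) :
    csG l j (k+1) = csW l j * (if j ≤ k then csPhi l k else -csPsi l k) := rfl

lemma csG_zero (j : ℕ) : csG l j 0 = 0 := rfl

lemma csG_decomp (j k : ℕ) (x : ℝ) :
    x * csG l j (k+1)
      = (if j ≤ k then (csPhi l k + csPsi l k) * (x * csW l j) else 0)
        + (-(csPsi l k)) * (x * csW l j) := by
  rw [csG_succ]
  by_cases h : j ≤ k <;> simp [h] <;> ring

variable (χ : ℕ → ℝ)

lemma summable_wχ (hl : 0 < l) (hχ0 : ∀ j, 0 ≤ χ j) (hχ1 : ∀ j, χ j ≤ 1) :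
    Summable (fun j => χ j * csW l j) := by
  apply Summable.of_nonneg_of_le (fun j => mul_nonneg (hχ0 j) (csW_nonneg hl j))
    (fun j => ?_) (summable_csW hl)
  calc χ j * csW l j ≤ 1 * csW l j :=
        mul_le_mul_of_nonneg_right (hχ1 j) (csW_nonneg hl j)
    _ = csW l j := one_mul _

lemma summable_ite_part (hl : 0 < l) (k : ℕ) :
    Summable (fun j => if j ≤ k then (csPhi l k + csPsi l k) * (χ j * csW l j) else 0) := by
  apply summable_of_ne_finset_zero (s := Finset.range (k+1))
  intro j hj
  rw [Finset.mem_range] at hj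
  rw [if_neg (by omega)]

lemma summable_chiG (hl : 0 < l) (hχ0 : ∀ j, 0 ≤ χ j) (hχ1 : ∀ j, χ j ≤ 1) (n : ℕ) :
    Summable (fun j => χ j * csG l j n) := by
  cases n with
  | zero =>
    simp only [csG_zero, mul_zero]
    exact summable_zero
  | succ k =>
    have h : (fun j => χ j * csG l j (k+1))
        = fun j => (if j ≤ k then (csPhi l k + csPsi l k) * (χ j * csW l j) else 0)
            + (-(csPsi l k)) * (χ j * csW l j) := by
      funext j; exact csG_decomp j k (χ j)
    rw [h]
    exact (summable_ite_part χ hl k).add (((summable_wχ χ hl hχ0 hχ1)).mul_left _)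

lemma tsum_chiG (hl : 0 < l) (hχ0 : ∀ j, 0 ≤ χ j) (hχ1 : ∀ j, χ j ≤ 1) (k : ℕ) :
    ∑' j, χ j * csG l j (k+1)
      = (csPhi l k + csPsi l k) * (∑ j ∈ Finset.range (k+1), χ j * csW l j)
        - csPsi l k * (∑' j, χ j * csW l j) := by
  have h : (fun j => χ j * csG l j (k+1))
      = fun j => (if j ≤ k then (csPhi l k + csPsi l k) * (χ j * csW l j) else 0)
          + (-(csPsi l k)) * (χ j * csW l j) := by
    funext j; exact csG_decomp j k (χ j)
  rw [h, Summable.tsum_add (summable_ite_part χ hl k) (((summable_wχ χ hl hχ0 hχ1)).mul_left _),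
    tsum_mul_left]
  rw [tsum_eq_sum (s := Finset.range (k+1)) (by
    intro j hj
    rw [Finset.mem_range] at hj
    rw [if_neg (by omega)])]
  have h2 : (∑ j ∈ Finset.range (k+1), if j ≤ k then (csPhi l k + csPsi l k) * (χ j * csW l j) else 0)
      = (csPhi l k + csPsi l k) * ∑ j ∈ Finset.range (k+1), χ j * csW l j := by
    rw [Finset.mul_sum]
    apply Finset.sum_congr rfl
    intro j hj
    rw [Finset.mem_range] at hj
    rw [if_pos (by omega)]
  rw [h2]
  ring

lemma tsum_G_zero (hl : 0 < l) (n : ℕ) : ∑' j, csG l j n = 0 := by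
  cases n with
  | zero => simp [csG_zero]
  | succ k =>
    have h1 : ∀ j, (1:ℝ) * csG l j (k+1) = csG l j (k+1) := fun j => one_mul _
    have h := tsum_chiG (l := l) (fun _ => 1) hl (fun _ => zero_le_one) (fun _ => le_refl 1) k
    simp only [one_mul] at h
    rw [h, tsum_csW hl, sum_csW hl k, mul_one, phi_add_psi hl k, psi_eq hl k]
    have hee : Real.exp l * Real.exp (-l) = 1 := by rw [← Real.exp_add]; simp
    linear_combination ((Nat.factorial k : ℝ) / l ^ (k+1)) * csE l k * hee

lemma summable_G (hl : 0 < l) (n : ℕ) : Summable (fun j => csG l j n) := by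
  have h := summable_chiG (l := l) (fun _ => 1) hl (fun _ => zero_le_one) (fun _ => le_refl 1) n
  simpa using h

-- sign lemma: D j k ≤ 0 for j ≠ k
lemma D_nonpos (hl : 0 < l) (j k : ℕ) (hjk : j ≠ k) :
    csG l j (k+1) - csG l j k ≤ 0 := by
  have hw := csW_nonneg hl j
  cases k with
  | zero =>
    rw [csG_zero, sub_zero, csG_succ, if_neg (by omega)]
    have := psi_nonneg hl 0
    nlinarith
  | succ k =>
    rw [csG_succ, csG_succ]
    rcases le_or_gt j k with h | h
    · rw [if_pos (by omega), if_pos h]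
      have := phi_anti hl k
      nlinarith
    · have hj2 : ¬ (j ≤ k) := by omega
      have hj3 : ¬ (j ≤ k+1) := by omega
      rw [if_neg hj3, if_neg hj2]
      have := psi_mono hl k
      nlinarith

-- key bound: D k k ≤ (1 - e^{-l})/l
lemma D_key (hl : 0 < l) (k : ℕ) :
    csG l k (k+1) - csG l k k ≤ (1 - Real.exp (-l)) / l := by
  have hexpl : Real.exp (-l) * Real.exp l = 1 := by rw [← Real.exp_add]; simp
  cases k with
  | zero =>
    rw [csG_zero, sub_zero, csG_succ, if_pos (le_refl 0)]
    have hW0 : csW l 0 = Real.exp (-l) := by unfold csW; simp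
    have hphi0 : csPhi l 0 = (Real.exp l - 1) / l := by
      unfold csPhi
      rw [← tsum_u hl]
      apply tsum_congr
      intro i
      simp only [Nat.factorial_zero, Nat.cast_one, zero_add]
      rw [show 1 + i = i + 1 by omega]
      ring
    rw [hW0, hphi0]
    have : Real.exp (-l) * ((Real.exp l - 1) / l) = (1 - Real.exp (-l)) / l := by
      field_simp
      linear_combination hexpl
    rw [this]
  | succ k =>
    rw [csG_succ, csG_succ, if_pos (le_refl (k+1)), if_neg (by omega)]
    have hWval : csW l (k+1) = Real.exp (-l) * (l ^ (k+1) / ((k+1).factorial : ℝ)) := by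
      unfold csW; ring
    -- main estimate
    have hA : l ^ (k+1) / ((k+1).factorial : ℝ) * csPhi l (k+1)
        = ∑' i : ℕ, (fun n : ℕ => l ^ n / ((n+1).factorial : ℝ)) (i + (k+1)) := by
      unfold csPhi
      rw [← tsum_mul_left]
      apply tsum_congr
      intro i
      simp only []
      have h1 : i + (k+1) + 1 = (k+1) + 1 + i := by omega
      have h2 : i + (k+1) = (k+1) + i := by omega
      rw [h1, h2, pow_add]
      have hfne : (((k+1)+1+i).factorial : ℝ) ≠ 0 := by positivity
      have hfne2 : (((k+1)).factorial : ℝ) ≠ 0 := by positivity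
      field_simp
      ring
    have hB : l ^ (k+1) / ((k+1).factorial : ℝ) * csPsi l k
        ≤ ∑ m ∈ Finset.range (k+1), l ^ m / ((m+1).factorial : ℝ) := by
      have hstep1 : l ^ (k+1) / ((k+1).factorial : ℝ) * csPsi l k
          = ∑ i ∈ Finset.range (k+1), l ^ (k-i) / (((k:ℝ)+1) * ((k-i).factorial : ℝ)) := by
        unfold csPsi
        rw [Finset.mul_sum]
        apply Finset.sum_congr rfl
        intro i hi
        rw [Finset.mem_range] at hi
        have hik : i ≤ k := by omega
        have hpow : l ^ (k+1) = l ^ (k-i) * l ^ (i+1) := by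
          rw [← pow_add]; congr 1; omega
        have hfact : ((k+1).factorial : ℝ) = ((k:ℝ)+1) * (k.factorial : ℝ) := by
          rw [Nat.factorial_succ]; push_cast; ring
        rw [hfact, hpow]
        have h1 : (k.factorial : ℝ) ≠ 0 := by positivity
        have h2 : ((k-i).factorial : ℝ) ≠ 0 := by positivity
        have hl0 : l ≠ 0 := hl.ne'
        simp only [one_div, inv_pow]
        field_simp
      rw [hstep1]
      rw [← Finset.sum_range_reflect (fun m => l ^ m / (((m+1).factorial : ℝ))) (k+1)]
      apply Finset.sum_le_sum
      intro i hi
      rw [Finset.mem_range] at hi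
      have hik : i ≤ k := by omega
      have h1 : k + 1 - 1 - i = k - i := by omega
      rw [h1]
      apply div_le_div_of_nonneg_left (by positivity) (by positivity)
      have : ((k-i)+1).factorial = ((k-i)+1) * (k-i).factorial := Nat.factorial_succ _
      rw [this]
      push_cast
      have : ((k:ℝ)-(i:ℝ))+1 ≤ (k:ℝ)+1 := by
        have : (0:ℝ) ≤ (i:ℝ) := by positivity
        linarith
      have hcast : ((k-i : ℕ) : ℝ) = (k:ℝ) - (i:ℝ) := by
        push_cast [Nat.cast_sub hik]; ring
      rw [hcast]
      have hkfpos : (0:ℝ) < ((k-i).factorial : ℝ) := by positivity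
      have hkf1 : (1:ℝ) ≤ ((k-i).factorial : ℝ) := by exact_mod_cast Nat.one_le_iff_ne_zero.mpr (Nat.factorial_ne_zero _)
      nlinarith
    have hquant : l ^ (k+1) / ((k+1).factorial : ℝ) * (csPhi l (k+1) + csPsi l k)
        ≤ (Real.exp l - 1) / l := by
      have hsplit := Summable.sum_add_tsum_nat_add
        (f := fun n : ℕ => l ^ n / ((n+1).factorial : ℝ)) (k+1) (summable_u hl)
      rw [mul_add, hA, ← tsum_u hl, ← hsplit]
      linarith [hB]
    have hfin : Real.exp (-l) * ((Real.exp l - 1) / l) = (1 - Real.exp (-l)) / l := by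
      field_simp
      linear_combination hexpl
    calc csW l (k+1) * csPhi l (k+1) - csW l (k+1) * (-csPsi l k)
        = Real.exp (-l) * (l ^ (k+1) / ((k+1).factorial : ℝ) * (csPhi l (k+1) + csPsi l k)) := by
          rw [hWval]; ring
      _ ≤ Real.exp (-l) * ((Real.exp l - 1) / l) :=
          mul_le_mul_of_nonneg_left hquant (Real.exp_nonneg _)
      _ = (1 - Real.exp (-l)) / l := hfin

end ChenSteinMain

section ChenSteinFinal

variable {l : ℝ}

lemma beta_nonneg (hl : 0 < l) : 0 ≤ (1 - Real.exp (-l)) / l := by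
  have h1 : Real.exp (-l) ≤ Real.exp 0 := Real.exp_le_exp.mpr (by linarith)
  rw [Real.exp_zero] at h1
  apply div_nonneg (by linarith) hl.le

lemma tsum_chiD_le (hl : 0 < l) (χ : ℕ → ℝ) (hχ0 : ∀ j, 0 ≤ χ j) (hχ1 : ∀ j, χ j ≤ 1) (k : ℕ) :
    ∑' j, χ j * (csG l j (k+1) - csG l j k) ≤ (1 - Real.exp (-l)) / l := by
  have hβ := beta_nonneg hl
  have hsum : Summable (fun j => χ j * (csG l j (k+1) - csG l j k)) := by
    apply Summable.congr
      ((summable_chiG χ hl hχ0 hχ1 (k+1)).sub (summable_chiG χ hl hχ0 hχ1 k))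
    intro j; ring
  have h2 : Summable (fun j => if j = k then χ k * (csG l k (k+1) - csG l k k) else 0) := by
    apply summable_of_ne_finset_zero (s := ({k} : Finset ℕ))
    intro j hj
    rw [Finset.mem_singleton] at hj
    rw [if_neg hj]
  have hle : ∀ j, χ j * (csG l j (k+1) - csG l j k)
      ≤ (fun j => if j = k then χ k * (csG l k (k+1) - csG l k k) else 0) j := by
    intro j
    by_cases hj : j = k
    · subst hj; simp
    · simp only [if_neg hj]
      exact mul_nonpos_of_nonneg_of_nonpos (hχ0 j) (D_nonpos hl j k hj)
  calc ∑' j, χ j * (csG l j (k+1) - csG l j k)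
      ≤ ∑' j, (fun j => if j = k then χ k * (csG l k (k+1) - csG l k k) else 0) j :=
        Summable.tsum_le_tsum hle hsum h2
    _ = χ k * (csG l k (k+1) - csG l k k) := tsum_ite_eq k _
    _ ≤ (1 - Real.exp (-l)) / l := by
        rcases le_or_gt (csG l k (k+1) - csG l k k) 0 with h | h
        · exact le_trans (mul_nonpos_of_nonneg_of_nonpos (hχ0 k) h) hβ
        · calc χ k * (csG l k (k+1) - csG l k k)
              ≤ 1 * (csG l k (k+1) - csG l k k) :=
                mul_le_mul_of_nonneg_right (hχ1 k) h.le
            _ = csG l k (k+1) - csG l k k := one_mul _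
            _ ≤ (1 - Real.exp (-l)) / l := D_key hl k

lemma g_eq_tsum (hl : 0 < l) (g : ℕ → ℝ) (χ : ℕ → ℝ)
    (hχ0 : ∀ j, 0 ≤ χ j) (hχ1 : ∀ j, χ j ≤ 1) (h0 : g 0 = 0)
    (hform : ∀ k : ℕ, g (k+1) * l ^ (k+1)
      = (Nat.factorial k : ℝ) * ∑ m ∈ Finset.range (k+1),
          l ^ m / (Nat.factorial m) * (χ m - ∑' m', csW l m' * χ m')) :
    ∀ n : ℕ, g n = ∑' j, χ j * csG l j n := by
  intro n
  cases n with
  | zero => simp [csG_zero, h0]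
  | succ k =>
    set c : ℝ := ∑' m', csW l m' * χ m' with hc
    have hc' : c = ∑' j, χ j * csW l j := tsum_congr (fun m => mul_comm _ _)
    have hlne : l ^ (k+1) ≠ 0 := by positivity
    have hgk : g (k+1) = ((Nat.factorial k : ℝ) / l ^ (k+1))
        * ∑ m ∈ Finset.range (k+1), l ^ m / (Nat.factorial m) * (χ m - c) := by
      have h2 : g (k+1) = ((Nat.factorial k : ℝ) * ∑ m ∈ Finset.range (k+1),
          l ^ m / (Nat.factorial m) * (χ m - c)) / l ^ (k+1) := by
        rw [eq_div_iff hlne]; exact hform k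
      rw [h2]; ring
    have hsum : ∑ m ∈ Finset.range (k+1), l ^ m / (Nat.factorial m) * (χ m - c)
        = (∑ m ∈ Finset.range (k+1), l ^ m / (Nat.factorial m) * χ m) - csE l k * c := by
      simp only [mul_sub]
      rw [Finset.sum_sub_distrib]
      congr 1
      unfold csE
      rw [Finset.sum_mul]
    have hterm : ∀ m : ℕ, ((Nat.factorial k : ℝ) / l ^ (k+1)) * (l ^ m / (Nat.factorial m) * χ m)
        = (csPhi l k + csPsi l k) * (χ m * csW l m) := by
      intro m
      rw [phi_add_psi hl k]
      unfold csW
      rw [Real.exp_neg]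
      have he := Real.exp_ne_zero l
      have hm : ((Nat.factorial m : ℝ)) ≠ 0 := by positivity
      field_simp
    rw [tsum_chiG χ hl hχ0 hχ1 k, hgk, hsum, mul_sub, Finset.mul_sum]
    rw [Finset.sum_congr rfl (fun m _ => hterm m), ← Finset.mul_sum]
    rw [← hc']
    congr 1
    rw [psi_eq hl k]
    ring

end ChenSteinFinal

/-- If `g` is the bounded solution (with `g 0 = 0`) of the Chen-Stein equation
`h(k) − E[h(Z)] = l·g(k+1) − k·g(k)` for the indicator test function `h = 1_B`,
where `Z` is Poisson with parameter `l > 0`, then the first forward difference of `g`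
satisfies `‖Δg‖_∞ ≤ (1 − e^{−l})/l ≤ min{1, 1/l}`. -/
theorem chen_stein_solution_bound (l : ℝ) (hl : 0 < l) (B : Set ℕ) (g : ℕ → ℝ)
    (hbdd : ∃ C : ℝ, ∀ n : ℕ, |g n| ≤ C) (h0 : g 0 = 0)
    (hCS : ∀ k : ℕ,
      B.indicator (fun _ => (1 : ℝ)) k
          - ∑' m : ℕ, (l ^ m * Real.exp (-l) / (Nat.factorial m))
              * B.indicator (fun _ => (1 : ℝ)) m
        = l * g (k + 1) - (k : ℝ) * g k) :
    (∀ k : ℕ, |g (k + 1) - g k| ≤ (1 - Real.exp (-l)) / l) ∧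
      (1 - Real.exp (-l)) / l ≤ min 1 (1 / l) := by
  classical
  set χ : ℕ → ℝ := fun m => B.indicator (fun _ => (1 : ℝ)) m with hχdef
  have hχ0 : ∀ j, 0 ≤ χ j := by
    intro j
    by_cases h : j ∈ B <;> simp [hχdef, Set.indicator_apply, h]
  have hχ1 : ∀ j, χ j ≤ 1 := by
    intro j
    by_cases h : j ∈ B <;> simp [hχdef, Set.indicator_apply, h]
  have hform := cs_formula hl g
    (fun m => χ m - ∑' m', csW l m' * χ m') (fun k => hCS k)
  have hgt := g_eq_tsum hl g χ hχ0 hχ1 h0 hform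
  constructor
  · intro k
    have hβ := beta_nonneg hl
    have hχD : Summable (fun j => χ j * (csG l j (k+1) - csG l j k)) := by
      apply Summable.congr
        ((summable_chiG χ hl hχ0 hχ1 (k+1)).sub (summable_chiG χ hl hχ0 hχ1 k))
      intro j; ring
    have hDsum : Summable (fun j => csG l j (k+1) - csG l j k) :=
      (summable_G hl (k+1)).sub (summable_G hl k)
    have hΔ : g (k+1) - g k = ∑' j, χ j * (csG l j (k+1) - csG l j k) := by
      rw [hgt (k+1), hgt k,
        ← Summable.tsum_sub (summable_chiG χ hl hχ0 hχ1 (k+1)) (summable_chiG χ hl hχ0 hχ1 k)]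
      exact tsum_congr (fun j => (mul_sub _ _ _).symm)
    have hupper : g (k+1) - g k ≤ (1 - Real.exp (-l)) / l := by
      rw [hΔ]; exact tsum_chiD_le hl χ hχ0 hχ1 k
    have hzero : ∑' j, (csG l j (k+1) - csG l j k) = 0 := by
      rw [Summable.tsum_sub (summable_G hl (k+1)) (summable_G hl k),
        tsum_G_zero hl (k+1), tsum_G_zero hl k]
      ring
    have hχ'0 : ∀ j, 0 ≤ 1 - χ j := fun j => by linarith [hχ1 j]
    have hχ'1 : ∀ j, 1 - χ j ≤ 1 := fun j => by linarith [hχ0 j]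
    have hcompl : ∑' j, (1 - χ j) * (csG l j (k+1) - csG l j k)
        = - (g (k+1) - g k) := by
      have h1 : (fun j => (1 - χ j) * (csG l j (k+1) - csG l j k))
          = fun j => (csG l j (k+1) - csG l j k) - χ j * (csG l j (k+1) - csG l j k) := by
        funext j; ring
      rw [h1, Summable.tsum_sub hDsum hχD, hzero, hΔ]
      ring
    have hlower : -((1 - Real.exp (-l)) / l) ≤ g (k+1) - g k := by
      have := tsum_chiD_le hl (fun j => 1 - χ j) hχ'0 hχ'1 k
      rw [hcompl] at this
      linarith
    exact abs_le.mpr ⟨hlower, hupper⟩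
  · apply le_min
    · rw [div_le_one hl]
      have := Real.add_one_le_exp (-l)
      linarith
    · rw [div_le_div_iff₀ hl hl]
      nlinarith [Real.exp_pos (-l)]
end

section
/- For natural numbers k, l, N with k ≤ l ≤ N, define p_{l,N} := 1/((6N−1)(6N−3)⋯(6N−2l+1)) and a_{k,N} := 3^k · 2N(2N−1)⋯(2N−k+1). Then a_{k,N} · p_{l,N} ≤ (1 + 1/(6N−1)) · N^{k−l} ≤ (6/5) · N^{k−l}. -/
open Finset

/-- `p_{l,N} = 1/((6N−1)(6N−3)⋯(6N−2l+1))`. -/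
noncomputable def pCfg (l N : ℕ) : ℝ :=
  ∏ j ∈ Finset.range l, 1 / (6 * (N : ℝ) - 2 * ((j : ℝ) + 1) + 1)

/-- `a_{k,N} = 3^k · 2N(2N−1)⋯(2N−k+1)`. -/
noncomputable def aCfg (k N : ℕ) : ℝ :=
  3 ^ k * ∏ j ∈ Finset.range k, (2 * (N : ℝ) - (j : ℝ))

/-- For `1 ≤ k ≤ l ≤ N` one has
`a_{k,N}·p_{l,N} ≤ (1 + 1/(6N−1))·N^{k−l} ≤ (6/5)·N^{k−l}`. -/
theorem aCfg_mul_pCfg_le (k l N : ℕ) (hk : 0 < k) (hkl : k ≤ l) (hlN : l ≤ N) :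
    aCfg k N * pCfg l N ≤ (1 + 1 / (6 * (N : ℝ) - 1)) * (N : ℝ) ^ ((k : ℤ) - (l : ℤ)) ∧
      (1 + 1 / (6 * (N : ℝ) - 1)) * (N : ℝ) ^ ((k : ℤ) - (l : ℤ))
        ≤ (6 / 5) * (N : ℝ) ^ ((k : ℤ) - (l : ℤ)) := by
  have hN1 : 1 ≤ N := le_trans (le_trans hk hkl) hlN
  have hNR : (1:ℝ) ≤ (N:ℝ) := by exact_mod_cast hN1
  have hNpos : (0:ℝ) < (N:ℝ) := by linarith
  have h6N : (0:ℝ) < 6*(N:ℝ) - 1 := by linarith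
  have hden : ∀ j : ℕ, j < N → (0:ℝ) < 6*(N:ℝ) - 2*((j:ℝ)+1) + 1 := by
    intro j hj
    have : ((j:ℝ)+1) ≤ (N:ℝ) := by exact_mod_cast hj
    linarith
  -- split pCfg
  have hsplit : pCfg l N = pCfg k N * ∏ j ∈ Finset.Ico k l, 1 / (6*(N:ℝ) - 2*((j:ℝ)+1) + 1) := by
    rw [pCfg, pCfg, Finset.range_eq_Ico, Finset.range_eq_Ico]
    exact (Finset.prod_Ico_consecutive (fun j : ℕ => 1 / (6 * (N : ℝ) - 2 * ((j : ℝ) + 1) + 1)) (Nat.zero_le k) hkl).symm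
  -- first part: aCfg k N * pCfg k N ≤ 6N/(6N-1)
  have hprod_eq : aCfg k N * pCfg k N
      = ∏ j ∈ Finset.range k, (3*(2*(N:ℝ)-(j:ℝ))) * (1/(6*(N:ℝ)-2*((j:ℝ)+1)+1)) := by
    rw [aCfg, pCfg, Finset.prod_mul_distrib, Finset.prod_mul_distrib,
      Finset.prod_const, Finset.card_range]
  have h1 : aCfg k N * pCfg k N ≤ 6*(N:ℝ)/(6*(N:ℝ)-1) := by
    rw [hprod_eq]
    have hgoal : ∏ j ∈ Finset.range k, (fun j : ℕ =>
        if j = 0 then 6*(N:ℝ)/(6*(N:ℝ)-1) else 1) j = 6*(N:ℝ)/(6*(N:ℝ)-1) := by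
      rw [Finset.prod_eq_single_of_mem 0 (Finset.mem_range.mpr hk)
        (fun b _ hb => if_neg hb)]
      simp
    rw [← hgoal]
    apply Finset.prod_le_prod
    · intro j hj
      have hj' : j < N := lt_of_lt_of_le (Finset.mem_range.mp hj) (le_trans hkl hlN)
      have hjN : ((j:ℝ)) ≤ (N:ℝ) := by
        have := hj'.le; exact_mod_cast this
      have hd := hden j hj'
      have : (0:ℝ) ≤ 3*(2*(N:ℝ)-(j:ℝ)) := by linarith
      positivity
    · intro j hj
      have hj' : j < N := lt_of_lt_of_le (Finset.mem_range.mp hj) (le_trans hkl hlN)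
      have hd := hden j hj'
      rcases Nat.eq_zero_or_pos j with h0 | h0
      · subst h0
        simp only [if_pos rfl]
        apply le_of_eq
        rw [mul_one_div]
        push_cast
        rw [div_eq_div_iff (by linarith) h6N.ne']
        ring
      · have hj1 : (1:ℝ) ≤ (j:ℝ) := by exact_mod_cast h0
        simp only [if_neg (Nat.pos_iff_ne_zero.mp h0)]
        rw [mul_one_div, div_le_one hd]
        linarith
  -- second part
  have h2 : ∏ j ∈ Finset.Ico k l, 1 / (6*(N:ℝ) - 2*((j:ℝ)+1) + 1) ≤ (1/(N:ℝ))^(l-k) := by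
    have : ∏ j ∈ Finset.Ico k l, (1/(N:ℝ)) = (1/(N:ℝ))^(l-k) := by
      rw [Finset.prod_const, Nat.card_Ico]
    rw [← this]
    apply Finset.prod_le_prod
    · intro j hj
      have hj' : j < N := lt_of_lt_of_le (Finset.mem_Ico.mp hj).2 hlN
      have hd := hden j hj'
      positivity
    · intro j hj
      have hj' : j < N := lt_of_lt_of_le (Finset.mem_Ico.mp hj).2 hlN
      have hd := hden j hj'
      have hjN : ((j:ℝ)+1) ≤ (N:ℝ) := by exact_mod_cast hj'
      rw [div_le_div_iff₀ hd hNpos]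
      linarith
  have hzpow : (N:ℝ) ^ ((k:ℤ) - (l:ℤ)) = (1/(N:ℝ))^(l-k) := by
    have hcast : (k:ℤ) - (l:ℤ) = -(((l-k : ℕ)):ℤ) := by
      push_cast [Nat.cast_sub hkl]; ring
    rw [hcast, zpow_neg, zpow_natCast, one_div, inv_pow]
  have hpow_nonneg : (0:ℝ) ≤ (1/(N:ℝ))^(l-k) := by positivity
  have hpk_nonneg : (0:ℝ) ≤ pCfg k N := by
    rw [pCfg]
    apply Finset.prod_nonneg
    intro j hj
    have hj' : j < N := lt_of_lt_of_le (Finset.mem_range.mp hj) (le_trans hkl hlN)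
    have hd := hden j hj'
    positivity
  have haCfg_nonneg : (0:ℝ) ≤ aCfg k N := by
    rw [aCfg]
    apply mul_nonneg (by positivity)
    apply Finset.prod_nonneg
    intro j hj
    have hj' : j < N := lt_of_lt_of_le (Finset.mem_range.mp hj) (le_trans hkl hlN)
    have hjN : ((j:ℝ)) ≤ (N:ℝ) := by exact_mod_cast hj'.le
    linarith
  have hIco_nonneg : (0:ℝ) ≤ ∏ j ∈ Finset.Ico k l, 1 / (6*(N:ℝ) - 2*((j:ℝ)+1) + 1) := by
    apply Finset.prod_nonneg
    intro j hj
    have hj' : j < N := lt_of_lt_of_le (Finset.mem_Ico.mp hj).2 hlN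
    have hd := hden j hj'
    positivity
  have heq16 : 6*(N:ℝ)/(6*(N:ℝ)-1) = 1 + 1/(6*(N:ℝ)-1) := by
    field_simp
    ring
  constructor
  · calc aCfg k N * pCfg l N
        = (aCfg k N * pCfg k N) * ∏ j ∈ Finset.Ico k l, 1 / (6*(N:ℝ) - 2*((j:ℝ)+1) + 1) := by
          rw [hsplit]; ring
      _ ≤ (6*(N:ℝ)/(6*(N:ℝ)-1)) * (1/(N:ℝ))^(l-k) := by
          apply mul_le_mul h1 h2 hIco_nonneg (by positivity)
      _ = (1 + 1/(6*(N:ℝ)-1)) * (N:ℝ) ^ ((k:ℤ) - (l:ℤ)) := by rw [heq16, hzpow]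
  · apply mul_le_mul_of_nonneg_right
    · have h5 : (5:ℝ) ≤ 6*(N:ℝ)-1 := by linarith
      have : 1/(6*(N:ℝ)-1) ≤ 1/5 := by
        apply one_div_le_one_div_of_le (by norm_num) h5
      linarith
    · rw [hzpow]; exact hpow_nonneg
end

section
/- For natural numbers k, l, m, N with k ≤ N, l ≤ N, m ≤ N and k ≤ l + m, one has a_{k,N} · p_{l,N} · p_{m,N} ≤ (6/5) · N^{k−l−m}, where p and a are as defined from the configuration model. -/
open Finset

/-- For `k, l, m ≤ N` with `k ≤ l + m` and `k, l, m ≥ 1`: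
`a_{k,N}·p_{l,N}·p_{m,N} ≤ (6/5)·N^{k−l−m}`. -/
theorem aCfg_mul_pCfg_pCfg_le (k l m N : ℕ) (hk : 0 < k) (hl : 0 < l) (hm : 0 < m)
    (hkN : k ≤ N) (hlN : l ≤ N) (hmN : m ≤ N) (hklm : k ≤ l + m) :
    aCfg k N * pCfg l N * pCfg m N
      ≤ (6 / 5) * (N : ℝ) ^ ((k : ℤ) - (l : ℤ) - (m : ℤ)) := by
  have hN1 : 1 ≤ N := hk.trans_le hkN
  have hNR : (1:ℝ) ≤ N := by exact_mod_cast hN1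
  set n : ℕ → ℝ := fun j => 6 * N - 3 * j with hn
  set d : ℕ → ℝ := fun i => 6 * N - 2 * i - 1 with hd
  have hdpos : ∀ i, i < N → (0:ℝ) < d i := by
    intro i hi
    have : (i:ℝ) + 1 ≤ N := by exact_mod_cast hi
    simp only [hd]; nlinarith
  have hnpos : ∀ j, j ≤ N → (0:ℝ) < n j := by
    intro j hj
    have : (j:ℝ) ≤ N := by exact_mod_cast hj
    simp only [hn]; nlinarith
  have ha : aCfg k N = ∏ j ∈ range k, n j := by
    have h3k : (3:ℝ) ^ k = ∏ _j ∈ range k, (3:ℝ) := by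
      rw [Finset.prod_const, Finset.card_range]
    rw [aCfg, h3k, ← Finset.prod_mul_distrib]
    refine Finset.prod_congr rfl fun j _ => by simp only [hn]; ring
  have hp : ∀ l' : ℕ, pCfg l' N = (∏ i ∈ range l', d i)⁻¹ := by
    intro l'
    rw [pCfg, ← Finset.prod_inv_distrib]
    refine Finset.prod_congr rfl fun j _ => by
      rw [one_div]; congr 1; simp only [hd]; ring
  set t := min k l with ht
  have ht1 : 1 ≤ t := le_min hk hl
  have htk : t ≤ k := min_le_left _ _
  have htl : t ≤ l := min_le_right _ _
  have hktm : k - t ≤ m := by omega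
  -- head bound
  have h_head : ∏ j ∈ range t, n j ≤ 6/5 * ∏ i ∈ range t, d i := by
    obtain ⟨t', ht'⟩ : ∃ t', t = t' + 1 := ⟨t - 1, by omega⟩
    rw [ht', Finset.prod_range_succ', Finset.prod_range_succ']
    have hA : ∏ j ∈ range t', n (j+1) ≤ ∏ j ∈ range t', d (j+1) := by
      refine Finset.prod_le_prod (fun j hj => ?_) (fun j hj => ?_)
      · exact le_of_lt (hnpos _ (by simp at hj; omega))
      · have : (0:ℝ) ≤ (j:ℝ) := Nat.cast_nonneg j
        simp only [hn, hd]; push_cast; nlinarith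
    have h0 : n 0 ≤ 6/5 * d 0 := by simp only [hn, hd]; push_cast; nlinarith
    have hn0 : (0:ℝ) ≤ n 0 := le_of_lt (hnpos 0 (by omega))
    have hPd : (0:ℝ) ≤ ∏ j ∈ range t', d (j+1) := by
      refine Finset.prod_nonneg fun j hj => le_of_lt (hdpos _ ?_)
      simp at hj; omega
    calc (∏ j ∈ range t', n (j+1)) * n 0
        ≤ (∏ j ∈ range t', d (j+1)) * (6/5 * d 0) := by
          refine mul_le_mul hA h0 hn0 hPd
      _ = 6/5 * ((∏ j ∈ range t', d (j+1)) * d 0) := by ring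
  -- shifted tail bound
  have h_shift : ∏ j ∈ Finset.Ico t k, n j ≤ ∏ i ∈ range (k - t), d i := by
    rw [Finset.prod_Ico_eq_prod_range]
    refine Finset.prod_le_prod (fun i hi => ?_) (fun i hi => ?_)
    · exact le_of_lt (hnpos _ (by simp at hi; omega))
    · have h1 : (1:ℝ) ≤ t := by exact_mod_cast ht1
      have : (0:ℝ) ≤ (i:ℝ) := Nat.cast_nonneg i
      simp only [hn, hd]; push_cast; nlinarith
  -- lower bounds for denominators
  have h_low : ∀ a b : ℕ, a ≤ b → b ≤ N →
      (∏ i ∈ range a, d i) * (N:ℝ) ^ (b - a) ≤ ∏ i ∈ range b, d i := by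
    intro a b hab hbN
    have hsplit : (∏ i ∈ Finset.Ico 0 a, d i) * ∏ i ∈ Finset.Ico a b, d i
        = ∏ i ∈ Finset.Ico 0 b, d i := Finset.prod_Ico_consecutive _ (Nat.zero_le a) hab
    rw [Finset.range_eq_Ico, Finset.range_eq_Ico, ← hsplit]
    have hpow : (N:ℝ) ^ (b - a) ≤ ∏ i ∈ Finset.Ico a b, d i := by
      have hNp : (N:ℝ) ^ (b - a) = ∏ _i ∈ range (b - a), (N:ℝ) := by
        rw [Finset.prod_const, Finset.card_range]
      rw [Finset.prod_Ico_eq_prod_range, hNp]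
      refine Finset.prod_le_prod (fun i _ => by linarith) (fun i hi => ?_)
      have hib : a + i < b := by simp at hi; omega
      have : ((a:ℝ) + i) + 1 ≤ N := by exact_mod_cast Nat.lt_of_lt_of_le hib hbN
      simp only [hd]; push_cast; nlinarith
    have hPa : (0:ℝ) ≤ ∏ i ∈ Finset.Ico 0 a, d i := by
      rw [← Finset.range_eq_Ico]
      exact Finset.prod_nonneg fun i hi => le_of_lt (hdpos _ (by simp at hi; omega))
    exact mul_le_mul_of_nonneg_left hpow hPa
  have h2 := h_low t l htl hlN
  have h3 := h_low (k - t) m hktm hmN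
  -- positivity of big products
  have hDl : (0:ℝ) < ∏ i ∈ range l, d i :=
    Finset.prod_pos fun i hi => hdpos _ (by simp at hi; omega)
  have hDm : (0:ℝ) < ∏ i ∈ range m, d i :=
    Finset.prod_pos fun i hi => hdpos _ (by simp at hi; omega)
  have hPt : (0:ℝ) ≤ ∏ i ∈ range t, d i :=
    Finset.prod_nonneg fun i hi => le_of_lt (hdpos _ (by simp at hi; omega))
  have hQ : (0:ℝ) ≤ ∏ i ∈ range (k - t), d i :=
    Finset.prod_nonneg fun i hi => le_of_lt (hdpos _ (by simp at hi; omega))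
  have hNn : (0:ℝ) ≤ (N:ℝ) := by linarith
  -- split the numerator product
  have hsplitn : ∏ j ∈ range k, n j
      = (∏ j ∈ range t, n j) * ∏ j ∈ Finset.Ico t k, n j := by
    rw [Finset.range_eq_Ico, ← Finset.prod_Ico_consecutive _ (Nat.zero_le t) htk, ← Finset.range_eq_Ico]
  set s := l + m - k with hs
  have hsplits : (N:ℝ) ^ s = (N:ℝ) ^ (l - t) * (N:ℝ) ^ (m - (k - t)) := by
    rw [← pow_add]; congr 1; omega
  have hnprod_nonneg : (0:ℝ) ≤ ∏ j ∈ Finset.Ico t k, n j :=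
    Finset.prod_nonneg fun j hj => le_of_lt (hnpos _ (by simp at hj; omega))
  have key : (∏ j ∈ range k, n j) * (N:ℝ) ^ s
      ≤ 6/5 * ((∏ i ∈ range l, d i) * ∏ i ∈ range m, d i) := by
    rw [hsplitn, hsplits]
    have step1 : (∏ j ∈ range t, n j) * (∏ j ∈ Finset.Ico t k, n j)
        ≤ (6/5 * ∏ i ∈ range t, d i) * ∏ i ∈ range (k - t), d i := by
      refine mul_le_mul h_head h_shift hnprod_nonneg (by positivity)
    calc (∏ j ∈ range t, n j) * (∏ j ∈ Finset.Ico t k, n j)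
          * ((N:ℝ) ^ (l - t) * (N:ℝ) ^ (m - (k - t)))
        ≤ (6/5 * ∏ i ∈ range t, d i) * (∏ i ∈ range (k - t), d i)
          * ((N:ℝ) ^ (l - t) * (N:ℝ) ^ (m - (k - t))) := by
          refine mul_le_mul_of_nonneg_right step1 (by positivity)
      _ = 6/5 * (((∏ i ∈ range t, d i) * (N:ℝ) ^ (l - t))
          * ((∏ i ∈ range (k - t), d i) * (N:ℝ) ^ (m - (k - t)))) := by ring
      _ ≤ 6/5 * ((∏ i ∈ range l, d i) * ∏ i ∈ range m, d i) := by
          refine mul_le_mul_of_nonneg_left ?_ (by norm_num)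
          refine mul_le_mul h2 h3 (by positivity) (le_of_lt hDl)
  -- finish
  have hzpow : (N:ℝ) ^ ((k : ℤ) - (l : ℤ) - (m : ℤ)) = ((N:ℝ) ^ s)⁻¹ := by
    have : (k : ℤ) - (l : ℤ) - (m : ℤ) = -(s : ℤ) := by omega
    rw [this, zpow_neg, zpow_natCast]
  rw [ha, hp, hp, hzpow]
  have hNs : (0:ℝ) < (N:ℝ) ^ s := by positivity
  rw [mul_assoc, ← mul_inv, ← div_eq_mul_inv, ← div_eq_mul_inv,
    div_le_div_iff₀ (by positivity) hNs]
  calc (∏ j ∈ range k, n j) * (N:ℝ) ^ s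
      ≤ 6/5 * ((∏ i ∈ range l, d i) * ∏ i ∈ range m, d i) := key
    _ = 6 / 5 * ((∏ i ∈ range l, d i) * ∏ i ∈ range m, d i) := by norm_num
end

section
/- For every ε > 0 there is a constant c_ε > 0 such that the number of equivalence classes (under cyclic permutation and reversal-with-swap) of nonempty words w in the matrices L = [[1,1],[0,1]] and R = [[1,0],[1,1]] containing both letters and having trace tr(w) ≤ k is at most c_ε · k^{2+ε}, for all k ≥ 2. -/
/-- The matrix `L = [[1,1],[0,1]]`. -/
def Lmat : Matrix (Fin 2) (Fin 2) ℤ := !![1, 1; 0, 1]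

/-- The matrix `R = [[1,0],[1,1]]`. -/
def Rmat : Matrix (Fin 2) (Fin 2) ℤ := !![1, 0; 1, 1]

/-- The product of matrices corresponding to a word in `{L, R}`
(`true` stands for `L`, `false` for `R`). -/
def wordProd (w : List Bool) : Matrix (Fin 2) (Fin 2) ℤ :=
  (w.map fun b => if b then Lmat else Rmat).prod

/-- One step of the equivalence on words: cyclic permutation, or reversal with `L`/`R`
swap. -/
def wordStep (w w' : List Bool) : Prop :=
  w' = w.rotate 1 ∨ w' = w.reverse.map fun b => !b

/-- The equivalence relation on words generated by cyclic permutations and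
reversal-with-swap. -/
def wordRel : List Bool → List Bool → Prop := Relation.EqvGen wordStep

lemma wordProd_nil : wordProd [] = 1 := rfl

lemma wordProd_cons (b : Bool) (t : List Bool) :
    wordProd (b :: t) = (if b then Lmat else Rmat) * wordProd t := by
  simp [wordProd]

lemma wordProd_append (u v : List Bool) :
    wordProd (u ++ v) = wordProd u * wordProd v := by
  simp [wordProd]

lemma wordProd_nonneg (w : List Bool) (i j : Fin 2) : 0 ≤ wordProd w i j := by
  induction w generalizing i j with
  | nil => simp [wordProd_nil, Matrix.one_apply]; positivity
  | cons b t ih =>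
    rw [wordProd_cons, Matrix.mul_apply]
    apply Finset.sum_nonneg
    intro k _
    have h1 : (0:ℤ) ≤ (if b then Lmat else Rmat) i k := by
      cases b <;> fin_cases i <;> fin_cases k <;> simp [Lmat, Rmat]
    exact mul_nonneg h1 (ih k j)

lemma wordProd_det (w : List Bool) : (wordProd w).det = 1 := by
  induction w with
  | nil => simp [wordProd_nil]
  | cons b t ih =>
    rw [wordProd_cons, Matrix.det_mul, ih, mul_one]
    cases b <;> simp [Lmat, Rmat, Matrix.det_fin_two_of]

lemma Linv : (!![1,-1;0,1] : Matrix (Fin 2) (Fin 2) ℤ) * Lmat = 1 := by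
  ext i j
  fin_cases i <;> fin_cases j <;>
    simp [Lmat, Matrix.mul_apply, Fin.sum_univ_two, Matrix.one_apply]

lemma Rinv : (!![1,0;-1,1] : Matrix (Fin 2) (Fin 2) ℤ) * Rmat = 1 := by
  ext i j
  fin_cases i <;> fin_cases j <;>
    simp [Rmat, Matrix.mul_apply, Fin.sum_univ_two, Matrix.one_apply]

lemma wordProd_ne_one (b : Bool) (t : List Bool) : wordProd (b :: t) ≠ 1 := by
  intro h
  rw [wordProd_cons] at h
  cases b
  · simp only [if_neg Bool.false_ne_true, Bool.false_eq_true, if_false] at h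
    have hN : wordProd t = !![1,0;-1,1] := by
      calc wordProd t = ((!![1,0;-1,1] : Matrix (Fin 2) (Fin 2) ℤ) * Rmat) * wordProd t := by
            rw [Rinv, one_mul]
        _ = !![1,0;-1,1] * (Rmat * wordProd t) := by rw [Matrix.mul_assoc]
        _ = !![1,0;-1,1] := by rw [h, Matrix.mul_one]
    have h2 := wordProd_nonneg t 1 0
    rw [hN] at h2
    simp at h2
  · simp only [if_true] at h
    have hN : wordProd t = !![1,-1;0,1] := by
      calc wordProd t = ((!![1,-1;0,1] : Matrix (Fin 2) (Fin 2) ℤ) * Lmat) * wordProd t := by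
            rw [Linv, one_mul]
        _ = !![1,-1;0,1] * (Lmat * wordProd t) := by rw [Matrix.mul_assoc]
        _ = !![1,-1;0,1] := by rw [h, Matrix.mul_one]
    have h2 := wordProd_nonneg t 0 1
    rw [hN] at h2
    simp at h2

lemma LR_ne (N1 N2 : Matrix (Fin 2) (Fin 2) ℤ) (h1 : ∀ i j, 0 ≤ N1 i j)
    (h2 : ∀ i j, 0 ≤ N2 i j) (hd : N1.det = 1) : Lmat * N1 ≠ Rmat * N2 := by
  intro h
  have e00 := congrFun (congrFun h 0) 0
  have e01 := congrFun (congrFun h 0) 1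
  have e10 := congrFun (congrFun h 1) 0
  have e11 := congrFun (congrFun h 1) 1
  simp [Lmat, Rmat, Matrix.mul_apply, Fin.sum_univ_two] at e00 e01 e10 e11
  rw [Matrix.det_fin_two] at hd
  nlinarith [h1 0 0, h1 0 1, h1 1 0, h1 1 1, h2 0 0, h2 0 1, h2 1 0, h2 1 1]

lemma wordProd_inj : ∀ w1 w2 : List Bool, wordProd w1 = wordProd w2 → w1 = w2 := by
  intro w1
  induction w1 with
  | nil =>
    intro w2 h
    cases w2 with
    | nil => rfl
    | cons b t => exact absurd (h.symm.trans wordProd_nil) (wordProd_ne_one b t)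
  | cons a t1 ih =>
    intro w2 h
    cases w2 with
    | nil => exact absurd (h.trans wordProd_nil) (wordProd_ne_one a t1)
    | cons b t2 =>
      rw [wordProd_cons, wordProd_cons] at h
      have hab : a = b := by
        by_contra hne
        cases a <;> cases b <;> simp at hne h ⊢
        · exact LR_ne (wordProd t2) (wordProd t1) (wordProd_nonneg t2)
            (wordProd_nonneg t1) (wordProd_det t2) h.symm
        · exact LR_ne (wordProd t1) (wordProd t2) (wordProd_nonneg t1)
            (wordProd_nonneg t2) (wordProd_det t1) h
      subst hab
      have ht : wordProd t1 = wordProd t2 := by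
        cases a
        · simp only [Bool.false_eq_true, if_false] at h
          calc wordProd t1 = ((!![1,0;-1,1] : Matrix (Fin 2) (Fin 2) ℤ) * Rmat) * wordProd t1 := by
                rw [Rinv, one_mul]
            _ = !![1,0;-1,1] * (Rmat * wordProd t1) := by rw [Matrix.mul_assoc]
            _ = !![1,0;-1,1] * (Rmat * wordProd t2) := by rw [h]
            _ = ((!![1,0;-1,1] : Matrix (Fin 2) (Fin 2) ℤ) * Rmat) * wordProd t2 := by
                rw [Matrix.mul_assoc]
            _ = wordProd t2 := by rw [Rinv, one_mul]
        · simp only [if_true] at h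
          calc wordProd t1 = ((!![1,-1;0,1] : Matrix (Fin 2) (Fin 2) ℤ) * Lmat) * wordProd t1 := by
                rw [Linv, one_mul]
            _ = !![1,-1;0,1] * (Lmat * wordProd t1) := by rw [Matrix.mul_assoc]
            _ = !![1,-1;0,1] * (Lmat * wordProd t2) := by rw [h]
            _ = ((!![1,-1;0,1] : Matrix (Fin 2) (Fin 2) ℤ) * Lmat) * wordProd t2 := by
                rw [Matrix.mul_assoc]
            _ = wordProd t2 := by rw [Linv, one_mul]
      rw [ih t2 ht]

lemma gen_mul_ge_one (b : Bool) (M : Matrix (Fin 2) (Fin 2) ℤ)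
    (hM : ∀ i j, 1 ≤ M i j) (i j : Fin 2) :
    1 ≤ ((if b then Lmat else Rmat) * M) i j := by
  cases b <;> rw [Matrix.mul_apply, Fin.sum_univ_two] <;> fin_cases i <;> fin_cases j <;>
    simp [Lmat, Rmat] <;> nlinarith [hM 0 0, hM 0 1, hM 1 0, hM 1 1]

lemma mul_gen_ge_one (b : Bool) (M : Matrix (Fin 2) (Fin 2) ℤ)
    (hM : ∀ i j, 1 ≤ M i j) (i j : Fin 2) :
    1 ≤ (M * (if b then Lmat else Rmat)) i j := by
  cases b <;> rw [Matrix.mul_apply, Fin.sum_univ_two] <;> fin_cases i <;> fin_cases j <;>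
    simp [Lmat, Rmat] <;> nlinarith [hM 0 0, hM 0 1, hM 1 0, hM 1 1]

lemma mul_wordProd_ge_one (w : List Bool) :
    ∀ M : Matrix (Fin 2) (Fin 2) ℤ, (∀ i j, 1 ≤ M i j) →
      ∀ i j, 1 ≤ (M * wordProd w) i j := by
  induction w with
  | nil => intro M hM i j; rw [wordProd_nil, Matrix.mul_one]; exact hM i j
  | cons b t ih =>
    intro M hM i j
    rw [wordProd_cons, ← Matrix.mul_assoc]
    exact ih _ (mul_gen_ge_one b M hM) i j

lemma wordProd_mul_ge_one (w : List Bool) :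
    ∀ M : Matrix (Fin 2) (Fin 2) ℤ, (∀ i j, 1 ≤ M i j) →
      ∀ i j, 1 ≤ (wordProd w * M) i j := by
  induction w with
  | nil => intro M hM i j; rw [wordProd_nil, Matrix.one_mul]; exact hM i j
  | cons b t ih =>
    intro M hM i j
    rw [wordProd_cons, Matrix.mul_assoc]
    exact gen_mul_ge_one b _ (ih M hM) i j

lemma exists_adj : ∀ w : List Bool, true ∈ w → false ∈ w →
    ∃ (u : List Bool) (b : Bool) (v : List Bool), w = u ++ b :: (!b) :: v := by
  intro w
  induction w with
  | nil => intro ht; simp at ht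
  | cons a t ih =>
    intro ht hf
    cases t with
    | nil =>
      simp at ht hf
      rw [ht] at hf; exact absurd hf (by simp)
    | cons c r =>
      by_cases hac : c = !a
      · exact ⟨[], a, r, by rw [hac]; rfl⟩
      · have hca : c = a := by cases a <;> cases c <;> simp_all
        have ht' : true ∈ c :: r := by
          cases a
        -- a = false: true ∈ a :: c :: r means true ∈ c :: r
          · simpa using ht
          · rw [hca]; exact List.mem_cons_self
        have hf' : false ∈ c :: r := by
          cases a
          · rw [hca]; exact List.mem_cons_self
          · simpa using hf
        obtain ⟨u, b, v, huv⟩ := ih ht' hf'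
        exact ⟨a :: u, b, v, by rw [List.cons_append, huv]⟩

lemma wordProd_pos (w : List Bool) (ht : true ∈ w) (hf : false ∈ w) (i j : Fin 2) :
    1 ≤ wordProd w i j := by
  obtain ⟨u, b, v, rfl⟩ := exists_adj w ht hf
  have key : ∀ i j, 1 ≤ (((if b then Lmat else Rmat) * (if !b then Lmat else Rmat))) i j := by
    intro i j
    cases b <;> rw [Matrix.mul_apply, Fin.sum_univ_two] <;> fin_cases i <;> fin_cases j <;>
      simp [Lmat, Rmat]
  have h2 : wordProd (b :: (!b) :: v) = ((if b then Lmat else Rmat) * (if !b then Lmat else Rmat)) * wordProd v := by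
    rw [wordProd_cons, wordProd_cons, Matrix.mul_assoc]
  rw [wordProd_append, h2]
  exact wordProd_mul_ge_one u _ (mul_wordProd_ge_one v _ key) i j

lemma divisor_bound (ε : ℝ) (hε : 0 < ε) :
    ∃ c : ℝ, 1 ≤ c ∧ ∀ n : ℕ, n ≠ 0 → (n.divisors.card : ℝ) ≤ c * (n : ℝ) ^ ε := by
  have h2ε : 1 < (2:ℝ) ^ ε := Real.one_lt_rpow_iff_of_pos (by norm_num) |>.2 (Or.inl ⟨by norm_num, hε⟩)
  set δ : ℝ := min ((2:ℝ) ^ ε - 1) 1 with hδdef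
  have hδpos : 0 < δ := lt_min (by linarith) one_pos
  have hδ1 : δ ≤ 1 := min_le_right _ _
  set c1 : ℝ := 1 / δ with hc1def
  have hc1 : 1 ≤ c1 := by
    rw [hc1def, le_div_iff₀ hδpos, one_mul]; exact hδ1
  have hc1pos : 0 < c1 := lt_of_lt_of_le one_pos hc1
  have claimA : ∀ e : ℕ, (e + 1 : ℝ) ≤ c1 * ((2:ℝ) ^ ε) ^ e := by
    intro e
    have hb : 1 + (e : ℝ) * δ ≤ ((2:ℝ) ^ ε) ^ e := by
      have h1 := one_add_mul_le_pow (a := (2:ℝ) ^ ε - 1) (by linarith) e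
      have hδle : δ ≤ (2:ℝ) ^ ε - 1 := min_le_left _ _
      have : 1 + (e : ℝ) * δ ≤ 1 + (e : ℝ) * ((2:ℝ) ^ ε - 1) := by
        have : (0:ℝ) ≤ (e:ℝ) := Nat.cast_nonneg e
        nlinarith
      calc 1 + (e : ℝ) * δ ≤ 1 + (e : ℝ) * ((2:ℝ) ^ ε - 1) := this
        _ ≤ (1 + ((2:ℝ) ^ ε - 1)) ^ e := h1
        _ = ((2:ℝ) ^ ε) ^ e := by ring_nf
    have h2 : ((e : ℝ) + 1) * δ ≤ 1 + (e : ℝ) * δ := by nlinarith [Nat.cast_nonneg (α := ℝ) e]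
    rw [hc1def, div_mul_eq_mul_div, le_div_iff₀ hδpos, one_mul]
    calc ((e : ℝ) + 1) * δ ≤ 1 + (e : ℝ) * δ := h2
      _ ≤ ((2:ℝ) ^ ε) ^ e := hb
  set N : ℕ := ⌈(2:ℝ) ^ (1 / ε)⌉₊ + 1 with hNdef
  refine ⟨c1 ^ N, one_le_pow₀ hc1, ?_⟩
  intro n hn
  rw [Nat.card_divisors hn]
  push_cast
  have key : ∀ p ∈ n.primeFactors,
      ((n.factorization p : ℝ) + 1) ≤
        (if (p:ℝ) ^ ε < 2 then c1 else 1) * (((p : ℝ) ^ (n.factorization p : ℕ)) ^ ε) := by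
    intro p hp
    have hpp : p.Prime := Nat.prime_of_mem_primeFactors hp
    have hp2 : (2:ℝ) ≤ (p:ℝ) := by exact_mod_cast hpp.two_le
    have hp0 : (0:ℝ) ≤ (p:ℝ) := by linarith
    set e := n.factorization p
    have hrw : ((p : ℝ) ^ (e : ℕ)) ^ ε = ((p:ℝ) ^ ε) ^ e := by
      rw [← Real.rpow_natCast (p:ℝ) e, ← Real.rpow_natCast ((p:ℝ) ^ ε) e,
        ← Real.rpow_mul hp0, ← Real.rpow_mul hp0, mul_comm]
    rw [hrw]
    by_cases hsmall : (p:ℝ) ^ ε < 2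
    · rw [if_pos hsmall]
      calc ((e : ℝ) + 1) ≤ c1 * ((2:ℝ) ^ ε) ^ e := claimA e
        _ ≤ c1 * ((p:ℝ) ^ ε) ^ e := by
            have h1 : (2:ℝ) ^ ε ≤ (p:ℝ) ^ ε := Real.rpow_le_rpow (by norm_num) hp2 hε.le
            have h2 : (0:ℝ) ≤ (2:ℝ) ^ ε := by positivity
            exact mul_le_mul_of_nonneg_left (pow_le_pow_left₀ h2 h1 e) hc1pos.le
    · rw [if_neg hsmall, one_mul]
      push_neg at hsmall
      have h1 : ((e : ℝ) + 1) ≤ (2:ℝ) ^ e := by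
        have := Nat.lt_two_pow_self (n := e)
        have : (e : ℝ) + 1 ≤ ((2:ℕ) ^ e : ℕ) := by exact_mod_cast this
        simpa using this
      calc ((e : ℝ) + 1) ≤ (2:ℝ) ^ e := h1
        _ ≤ ((p:ℝ) ^ ε) ^ e := pow_le_pow_left₀ (by norm_num) hsmall e
  have step1 : (∏ p ∈ n.primeFactors, ((n.factorization p : ℝ) + 1)) ≤
      ∏ p ∈ n.primeFactors,
        ((if (p:ℝ) ^ ε < 2 then c1 else 1) * (((p : ℝ) ^ (n.factorization p : ℕ)) ^ ε)) := by
    apply Finset.prod_le_prod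
    · intro p _; positivity
    · exact key
  rw [Finset.prod_mul_distrib] at step1
  have step2 : (∏ p ∈ n.primeFactors, (if (p:ℝ) ^ ε < 2 then c1 else 1)) ≤ c1 ^ N := by
    rw [Finset.prod_ite, Finset.prod_const, Finset.prod_const, one_pow, mul_one]
    apply pow_le_pow_right₀ hc1
    have hsub : (n.primeFactors.filter (fun p : ℕ => (p:ℝ) ^ ε < 2)) ⊆ Finset.range N := by
      intro p hp
      rw [Finset.mem_filter] at hp
      obtain ⟨hp1, hp2⟩ := hp
      have hpp : p.Prime := Nat.prime_of_mem_primeFactors hp1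
      have hp0 : (0:ℝ) ≤ (p:ℝ) := Nat.cast_nonneg p
      have hlt : (p:ℝ) < (2:ℝ) ^ (1/ε) := by
        have h1 : ((p:ℝ) ^ ε) ^ (1/ε) < (2:ℝ) ^ (1/ε) :=
          Real.rpow_lt_rpow (by positivity) hp2 (by positivity)
        rwa [← Real.rpow_mul hp0, mul_one_div, div_self hε.ne', Real.rpow_one] at h1
      have : (p:ℝ) < (N : ℝ) := by
        calc (p:ℝ) < (2:ℝ) ^ (1/ε) := hlt
          _ ≤ (⌈(2:ℝ) ^ (1/ε)⌉₊ : ℝ) := Nat.le_ceil _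
          _ < (N : ℝ) := by rw [hNdef]; push_cast; linarith
      rw [Finset.mem_range]
      exact_mod_cast this
    calc (n.primeFactors.filter (fun p : ℕ => (p:ℝ) ^ ε < 2)).card ≤ (Finset.range N).card :=
        Finset.card_le_card hsub
      _ = N := Finset.card_range N
  have step3 : (∏ p ∈ n.primeFactors, (((p : ℝ) ^ (n.factorization p : ℕ)) ^ ε)) = (n:ℝ) ^ ε := by
    rw [Real.finset_prod_rpow _ _ (fun p _ => by positivity)]
    have hprod : (∏ p ∈ n.primeFactors, p ^ n.factorization p) = n := by
      rw [← Nat.support_factorization]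
      exact Nat.factorization_prod_pow_eq_self hn
    congr 1
    exact_mod_cast hprod
  rw [step3] at step1
  calc (∏ p ∈ n.primeFactors, ((n.factorization p : ℝ) + 1)) ≤ _ := step1
    _ ≤ c1 ^ N * (n:ℝ) ^ ε := by
        apply mul_le_mul_of_nonneg_right step2 (by positivity)

/-- The triple of entries used to encode a positive matrix. -/
def mtriple (M : Matrix (Fin 2) (Fin 2) ℤ) : ℕ × ℕ × ℕ :=
  ((M 0 0).toNat, (M 1 1).toNat, (M 0 1).toNat)

lemma mtriple_mem (k : ℕ) (M : Matrix (Fin 2) (Fin 2) ℤ)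
    (hpos : ∀ i j, 1 ≤ M i j) (hdet : M.det = 1) (htr : M.trace ≤ (k : ℤ)) :
    mtriple M ∈ (Finset.Icc 1 k ×ˢ Finset.Icc 1 k).biUnion
      (fun p => (p.1*p.2-1).divisors.image (fun b => (p.1, p.2, b))) := by
  have hpos00 := hpos 0 0
  have hpos01 := hpos 0 1
  have hpos10 := hpos 1 0
  have hpos11 := hpos 1 1
  rw [Matrix.det_fin_two] at hdet
  rw [Matrix.trace_fin_two] at htr
  rw [Finset.mem_biUnion]
  refine ⟨((M 0 0).toNat, (M 1 1).toNat), ?_, ?_⟩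
  · rw [Finset.mem_product, Finset.mem_Icc, Finset.mem_Icc]
    refine ⟨⟨by omega, by omega⟩, by omega, by omega⟩
  · rw [Finset.mem_image]
    refine ⟨(M 0 1).toNat, ?_, rfl⟩
    rw [Nat.mem_divisors]
    dsimp only
    have hmul : (M 0 1).toNat * (M 1 0).toNat + 1 = (M 0 0).toNat * (M 1 1).toNat := by
      have h : (((M 0 1).toNat * (M 1 0).toNat + 1 : ℕ) : ℤ)
          = (((M 0 0).toNat * (M 1 1).toNat : ℕ) : ℤ) := by
        push_cast
        rw [Int.toNat_of_nonneg (by linarith), Int.toNat_of_nonneg (by linarith),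
          Int.toNat_of_nonneg (by linarith), Int.toNat_of_nonneg (by linarith)]
        linarith
      exact_mod_cast h
    refine ⟨⟨(M 1 0).toNat, by rw [← hmul, Nat.add_sub_cancel]⟩, ?_⟩
    rw [← hmul, Nat.add_sub_cancel]
    exact Nat.mul_ne_zero (by omega) (by omega)

lemma mtriple_inj (M M' : Matrix (Fin 2) (Fin 2) ℤ)
    (hpos : ∀ i j, 1 ≤ M i j) (hpos' : ∀ i j, 1 ≤ M' i j)
    (hdet : M.det = 1) (hdet' : M'.det = 1)
    (heq : mtriple M = mtriple M') : M = M' := by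
  unfold mtriple at heq
  have e1 : (M 0 0).toNat = (M' 0 0).toNat := congrArg Prod.fst heq
  have e2 : (M 1 1).toNat = (M' 1 1).toNat := congrArg (fun p => p.2.1) heq
  have e3 : (M 0 1).toNat = (M' 0 1).toNat := congrArg (fun p => p.2.2) heq
  have f1 : M 0 0 = M' 0 0 := by have h1 := hpos 0 0; have h2 := hpos' 0 0; omega
  have f2 : M 1 1 = M' 1 1 := by have h1 := hpos 1 1; have h2 := hpos' 1 1; omega
  have f3 : M 0 1 = M' 0 1 := by have h1 := hpos 0 1; have h2 := hpos' 0 1; omega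
  rw [Matrix.det_fin_two] at hdet hdet'
  have f4 : M 1 0 = M' 1 0 := by
    have hne : M 0 1 ≠ 0 := by have := hpos 0 1; omega
    apply mul_left_cancel₀ hne
    linear_combination hdet' - hdet + M 1 1 * f1 + M' 0 0 * f2 - M' 1 0 * f3
  ext i j
  fin_cases i <;> fin_cases j <;> assumption

/-- For every `ε > 0` there is `c_ε > 0` such that the number of equivalence classes of
nonempty words containing both letters and of trace at most `k` is at most `c_ε·k^{2+ε}`,
for all `k ≥ 2`. -/
theorem card_wordClasses_trace_le : ∀ ε : ℝ, 0 < ε → ∃ c : ℝ, 0 < c ∧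
    ∀ k : ℕ, 2 ≤ k →
      (Set.ncard {C : Set (List Bool) | ∃ w : List Bool,
          w ≠ [] ∧ true ∈ w ∧ false ∈ w ∧ (wordProd w).trace ≤ (k : ℤ) ∧
            C = {v | wordRel w v}} : ℝ)
        ≤ c * (k : ℝ) ^ ((2 : ℝ) + ε) := by
  classical
  intro ε hε
  obtain ⟨c, hc1, hc⟩ := divisor_bound (ε/2) (by positivity)
  refine ⟨c, lt_of_lt_of_le one_pos hc1, ?_⟩
  intro k hk
  have hkpos : (0:ℝ) < (k:ℝ) := by
    have : (0:ℕ) < k := by omega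
    exact_mod_cast this
  set T : Finset (ℕ×ℕ×ℕ) := (Finset.Icc 1 k ×ˢ Finset.Icc 1 k).biUnion
      (fun p => (p.1*p.2-1).divisors.image (fun b => (p.1, p.2, b))) with hT
  have hmain : (Set.ncard {C : Set (List Bool) | ∃ w : List Bool,
      w ≠ [] ∧ true ∈ w ∧ false ∈ w ∧ (wordProd w).trace ≤ (k : ℤ) ∧
        C = {v | wordRel w v}}) ≤ T.card := by
    rw [← Set.ncard_coe_finset T]
    apply Set.ncard_le_ncard_of_injOn (fun C =>
      if h : ∃ w : List Bool, w ≠ [] ∧ true ∈ w ∧ false ∈ w ∧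
          (wordProd w).trace ≤ (k:ℤ) ∧ C = {v | wordRel w v}
      then mtriple (wordProd h.choose)
      else (0,0,0))
    · intro C hC
      rw [Set.mem_setOf_eq] at hC
      simp only [dif_pos hC, Finset.mem_coe]
      obtain ⟨-, htw, hfw, htr, -⟩ := hC.choose_spec
      exact mtriple_mem k _ (wordProd_pos hC.choose htw hfw) (wordProd_det _) htr
    · intro C hC C' hC' heq
      rw [Set.mem_setOf_eq] at hC hC'
      simp only [dif_pos hC, dif_pos hC'] at heq
      obtain ⟨-, htw, hfw, -, hCeq⟩ := hC.choose_spec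
      obtain ⟨-, htw', hfw', -, hCeq'⟩ := hC'.choose_spec
      have hMM := mtriple_inj _ _ (wordProd_pos hC.choose htw hfw)
        (wordProd_pos hC'.choose htw' hfw') (wordProd_det _) (wordProd_det _) heq
      have hww : hC.choose = hC'.choose := wordProd_inj _ _ hMM
      rw [hCeq, hCeq', hww]
  have hcard : (T.card : ℝ) ≤ (k:ℝ) * (k:ℝ) * (c * (k:ℝ) ^ ε) := by
    have h1 : T.card ≤ ∑ p ∈ Finset.Icc 1 k ×ˢ Finset.Icc 1 k,
        ((p.1*p.2-1).divisors.image (fun b => (p.1, p.2, b))).card :=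
      Finset.card_biUnion_le
    have h2 : ∀ p ∈ Finset.Icc 1 k ×ˢ Finset.Icc 1 k,
        (((p.1*p.2-1).divisors.image (fun b => (p.1, p.2, b))).card : ℝ) ≤ c * (k:ℝ) ^ ε := by
      intro p hp
      rw [Finset.mem_product, Finset.mem_Icc, Finset.mem_Icc] at hp
      have himg : (((p.1*p.2-1).divisors.image (fun b => (p.1, p.2, b))).card : ℝ)
          ≤ ((p.1*p.2-1).divisors.card : ℝ) := by
        exact_mod_cast Finset.card_image_le
      refine le_trans himg ?_
      by_cases hn : p.1*p.2-1 = 0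
      · rw [hn]
        simp only [Nat.divisors_zero, Finset.card_empty, Nat.cast_zero]
        positivity
      · refine le_trans (hc _ hn) ?_
        have hmono : ((p.1*p.2-1 : ℕ) : ℝ) ^ (ε/2) ≤ ((k*k : ℕ) : ℝ) ^ (ε/2) := by
          apply Real.rpow_le_rpow (by positivity) _ (by positivity)
          have h3 : p.1*p.2-1 ≤ k*k := by
            have := Nat.mul_le_mul hp.1.2 hp.2.2
            omega
          exact_mod_cast h3
        have hkk : ((k*k : ℕ) : ℝ) ^ (ε/2) = (k:ℝ) ^ ε := by
          push_cast
          rw [show ((k:ℝ) * k) = (k:ℝ) ^ (2:ℝ) by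
            rw [show (2:ℝ) = ((2:ℕ):ℝ) by norm_num, Real.rpow_natCast]; ring]
          rw [← Real.rpow_mul hkpos.le, show (2:ℝ) * (ε/2) = ε by ring]
        rw [hkk] at hmono
        exact mul_le_mul_of_nonneg_left hmono (by linarith)
    calc (T.card : ℝ) ≤ ((∑ p ∈ Finset.Icc 1 k ×ˢ Finset.Icc 1 k,
        ((p.1*p.2-1).divisors.image (fun b => (p.1, p.2, b))).card : ℕ) : ℝ) := by
          exact_mod_cast h1
      _ = ∑ p ∈ Finset.Icc 1 k ×ˢ Finset.Icc 1 k,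
          (((p.1*p.2-1).divisors.image (fun b => (p.1, p.2, b))).card : ℝ) := by push_cast; rfl
      _ ≤ ∑ _p ∈ Finset.Icc 1 k ×ˢ Finset.Icc 1 k, (c * (k:ℝ) ^ ε) := Finset.sum_le_sum h2
      _ = ((Finset.Icc 1 k ×ˢ Finset.Icc 1 k).card : ℝ) * (c * (k:ℝ) ^ ε) := by
          rw [Finset.sum_const, nsmul_eq_mul]
      _ = (k:ℝ) * (k:ℝ) * (c * (k:ℝ) ^ ε) := by
          rw [Finset.card_product, Nat.card_Icc]
          push_cast
          ring_nf
  have hfinal : (k:ℝ) * (k:ℝ) * (c * (k:ℝ) ^ ε) = c * (k:ℝ) ^ ((2:ℝ) + ε) := by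
    rw [Real.rpow_add hkpos]
    rw [show ((k:ℝ) ^ (2:ℝ)) = (k:ℝ) * (k:ℝ) by
      rw [show (2:ℝ) = ((2:ℕ):ℝ) by norm_num, Real.rpow_natCast]; ring]
    ring
  calc (Set.ncard _ : ℝ) ≤ (T.card : ℝ) := by exact_mod_cast hmain
    _ ≤ (k:ℝ) * (k:ℝ) * (c * (k:ℝ) ^ ε) := hcard
    _ = c * (k:ℝ) ^ ((2:ℝ) + ε) := hfinal
end
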